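/- Every automorphism of M_n(ℂ) of the form Ad u with u unitary is an operational extreme point of the set of unital completely positive maps on M_n(ℂ). -/

import Mathlib

open Matrix ComplexOrder

/-- The algebra of `n × n` complex matrices. -/
abbrev Mat (n : ℕ) := Matrix (Fin n) (Fin n) ℂ

/-- The map `Ad v : x ↦ v x v*` as a linear map. -/
noncomputable def adL {n : ℕ} (v : Mat n) : Mat n →ₗ[ℂ] Mat n where
  toFun x := v * x * star v
  map_add' x y := by simp [Matrix.mul_add, Matrix.add_mul]
  map_smul' c x := by simp [Matrix.mul_smul, Matrix.smul_mul]

/-- A positive map sends positive semidefinite matrices to positive semidefinite matrices. -/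
def IsPosMap (n : ℕ) (Φ : Mat n →ₗ[ℂ] Mat n) : Prop :=
  ∀ A : Mat n, A.PosSemidef → (Φ A).PosSemidef

/-- `Φ` is completely positive: `Φ ⊗ id_k` is positive for every `k`, where a block matrix
in `M_n ⊗ M_k` is applied `Φ` blockwise. -/
def IsCompletelyPositive (n : ℕ) (Φ : Mat n →ₗ[ℂ] Mat n) : Prop :=
  ∀ k : ℕ, ∀ A : Matrix (Fin n × Fin k) (Fin n × Fin k) ℂ, A.PosSemidef →
    (Matrix.of fun p q : Fin n × Fin k =>
      (Φ (Matrix.of fun i j => A (i, p.2) (j, q.2))) p.1 q.1).PosSemidef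

/-- Unital completely positive map. -/
def IsUCP (n : ℕ) (Φ : Mat n →ₗ[ℂ] Mat n) : Prop :=
  Φ 1 = 1 ∧ IsCompletelyPositive n Φ

/-- A finite operational partition of unity: nonzero matrices with `∑ vᵢ vᵢ* = 1`. -/
def IsFOP {n m : ℕ} (v : Fin m → Mat n) : Prop :=
  (∀ i, v i ≠ 0) ∧ ∑ i, v i * star (v i) = 1

/-- Operational extreme point of a set `S` of linear maps. -/
def IsOpExtreme (n : ℕ) (S : Set (Mat n →ₗ[ℂ] Mat n)) (Φ : Mat n →ₗ[ℂ] Mat n) : Prop :=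
  Φ ∈ S ∧ ∀ (a b : Mat n) (Φ₁ Φ₂ : Mat n →ₗ[ℂ] Mat n),
    Φ₁ ∈ S → Φ₂ ∈ S → a ≠ 0 → b ≠ 0 → a * star a + b * star b = 1 →
    Φ = (adL a).comp Φ₁ + (adL b).comp Φ₂ →
    ∃ l : ℝ, l ∈ Set.Ioo (0 : ℝ) 1 ∧
      a * star a = (l : ℂ) • (1 : Mat n) ∧
      b * star b = ((1 - l : ℝ) : ℂ) • (1 : Mat n) ∧
      ((l⁻¹ : ℝ) : ℂ) • (adL a).comp Φ₁ = Φ ∧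
      (((1 - l)⁻¹ : ℝ) : ℂ) • (adL b).comp Φ₂ = Φ


section Helpers
set_option linter.unusedSectionVars false
variable {m : Type*} [Fintype m] [DecidableEq m]


lemma vecMulVec_mulVec' (w v x : m → ℂ) : vecMulVec w v *ᵥ x = (v ⬝ᵥ x) • w := by
  ext i
  simp only [mulVec, dotProduct, vecMulVec_apply, Pi.smul_apply, smul_eq_mul, Finset.sum_mul]
  exact Finset.sum_congr rfl fun j _ => by ring

lemma star_dot' (v x : m → ℂ) : star (star v ⬝ᵥ x) = star x ⬝ᵥ v := by
  simp only [dotProduct, star_sum, star_mul', star_star, Pi.star_apply]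
  exact Finset.sum_congr rfl fun j _ => by ring

lemma vecMulVec_star_psd (w : m → ℂ) : (vecMulVec w (star w)).PosSemidef := by
  apply PosSemidef.of_dotProduct_mulVec_nonneg
  · ext i j
    simp [vecMulVec_apply, conjTranspose_apply, mul_comm]
  · intro x
    rw [vecMulVec_mulVec']
    have h : star x ⬝ᵥ (star w ⬝ᵥ x) • w = (star w ⬝ᵥ x) * (star x ⬝ᵥ w) := by
      simp [dotProduct_smul, smul_eq_mul]
    rw [h, ← star_dot' w x, mul_comm]
    exact star_mul_self_nonneg (star w ⬝ᵥ x)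

lemma rank_one_decomp (w : m → ℂ) (hw : w ≠ 0) {P Q : Matrix m m ℂ}
    (hP : P.PosSemidef) (hQ : Q.PosSemidef) (hPQ : P + Q = vecMulVec w (star w)) :
    ∃ l : ℝ, 0 ≤ l ∧ l ≤ 1 ∧ P = (l : ℂ) • vecMulVec w (star w) ∧
      Q = ((1 - l : ℝ) : ℂ) • vecMulVec w (star w) := by
  set W : Matrix m m ℂ := vecMulVec w (star w) with hWdef
  set S : ℝ := ∑ i, Complex.normSq (w i) with hSdef
  have hs : star w ⬝ᵥ w = (S : ℂ) := by
    simp only [dotProduct, Pi.star_apply, hSdef, Complex.ofReal_sum]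
    exact Finset.sum_congr rfl fun i _ => by
      rw [Complex.star_def, ← Complex.normSq_eq_conj_mul_self]
  have hSpos : 0 < S := by
    obtain ⟨i, hi⟩ : ∃ i, w i ≠ 0 := by
      by_contra h
      push_neg at h
      exact hw (funext h)
    exact Finset.sum_pos' (fun j _ => Complex.normSq_nonneg _)
      ⟨i, Finset.mem_univ i, Complex.normSq_pos.2 hi⟩
  have hS0 : (S : ℂ) ≠ 0 := by exact_mod_cast hSpos.ne'
  -- key: P kills the orthogonal complement of w
  have key : ∀ y : m → ℂ, star w ⬝ᵥ y = 0 → P *ᵥ y = 0 := by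
    intro y hy
    have h1 : 0 ≤ star y ⬝ᵥ P *ᵥ y := hP.dotProduct_mulVec_nonneg y
    have h2 : 0 ≤ star y ⬝ᵥ Q *ᵥ y := hQ.dotProduct_mulVec_nonneg y
    have h3 : star y ⬝ᵥ P *ᵥ y + star y ⬝ᵥ Q *ᵥ y = 0 := by
      have : star y ⬝ᵥ (P + Q) *ᵥ y = 0 := by
        rw [hPQ, vecMulVec_mulVec', hy, zero_smul, dotProduct_zero]
      rw [← this, add_mulVec, dotProduct_add]
    have h4 : star y ⬝ᵥ P *ᵥ y = 0 :=
      ((add_eq_zero_iff_of_nonneg h1 h2).1 h3).1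
    exact (hP.dotProduct_mulVec_zero_iff y).1 h4
  -- P w is a multiple of w
  set α : ℂ := (star w ⬝ᵥ P *ᵥ w) / (S : ℂ) with hαdef
  have hPw : P *ᵥ w = α • w := by
    set y₀ : m → ℂ := P *ᵥ w - α • w with hy₀
    have h0 : star w ⬝ᵥ y₀ = 0 := by
      rw [hy₀, dotProduct_sub, dotProduct_smul, hs, smul_eq_mul, hαdef,
        div_mul_cancel₀ _ hS0, sub_self]
    have hy₀w : star y₀ ⬝ᵥ w = 0 := by rw [← star_dot' w y₀, h0, star_zero]
    have hPy₀ : P *ᵥ y₀ = 0 := key y₀ h0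
    have hy₀P : star y₀ ⬝ᵥ P *ᵥ w = 0 := by
      have e : star y₀ ⬝ᵥ P *ᵥ w = star (star w ⬝ᵥ P *ᵥ y₀) := by
        rw [star_dot' w (P *ᵥ y₀), star_mulVec, ← dotProduct_mulVec, hP.1.eq]
      rw [e, hPy₀, dotProduct_zero, star_zero]
    have hzero : star y₀ ⬝ᵥ y₀ = 0 := by
      nth_rewrite 2 [hy₀]
      rw [dotProduct_sub, hy₀P, dotProduct_smul, smul_eq_mul, hy₀w, mul_zero, sub_zero]
    have := dotProduct_star_self_eq_zero.1 hzero
    rw [hy₀] at this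
    exact sub_eq_zero.1 this
  -- P x for general x
  have hPx : ∀ x : m → ℂ, P *ᵥ x = ((star w ⬝ᵥ x) / (S : ℂ)) • (α • w) := by
    intro x
    have h0 : star w ⬝ᵥ (x - ((star w ⬝ᵥ x) / (S : ℂ)) • w) = 0 := by
      rw [dotProduct_sub, dotProduct_smul, hs, smul_eq_mul,
        div_mul_cancel₀ _ hS0, sub_self]
    have h1 := key _ h0
    rw [mulVec_sub, mulVec_smul, hPw, sub_eq_zero] at h1
    exact h1
  -- the real parameter
  have hα0 : 0 ≤ star w ⬝ᵥ P *ᵥ w := hP.dotProduct_mulVec_nonneg w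
  rw [Complex.nonneg_iff] at hα0
  set r : ℝ := (star w ⬝ᵥ P *ᵥ w).re with hrdef
  have hz : star w ⬝ᵥ P *ᵥ w = (r : ℂ) := by
    apply Complex.ext
    · simp [hrdef]
    · simp [← hα0.2]
  have hPfin : P = ((r / S ^ 2 : ℝ) : ℂ) • W := by
    ext i j
    have h1 := congrFun (hPx (Pi.single j 1)) i
    rw [mulVec_single] at h1
    simp only [Pi.smul_apply, smul_eq_mul, dotProduct_single, Pi.star_apply, mul_one,
      MulOpposite.op_one, one_smul, col_apply] at h1
    rw [h1, Matrix.smul_apply, hWdef, vecMulVec_apply, Pi.star_apply, hαdef, hz]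
    push_cast
    field_simp
    rw [smul_eq_mul, ← mul_assoc, mul_div_assoc', mul_comm ((S : ℂ) ^ 2), mul_div_assoc,
      div_self (pow_ne_zero 2 hS0), mul_one]
    ring
  have hQfin : Q = ((1 - r / S ^ 2 : ℝ) : ℂ) • W := by
    have hQW : Q = W - P := by rw [← hPQ]; abel
    rw [hQW, hPfin]
    push_cast
    rw [sub_smul, one_smul]
  have hle : r / S ^ 2 ≤ 1 := by
    have hQw : Q *ᵥ w = (((1 - r / S ^ 2 : ℝ) : ℂ) * (S : ℂ)) • w := by
      rw [hQfin, smul_mulVec, hWdef, vecMulVec_mulVec', hs, smul_smul]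
    have h4 := hQ.dotProduct_mulVec_nonneg w
    rw [hQw, dotProduct_smul, hs, smul_eq_mul] at h4
    rw [show (((1 - r / S ^ 2 : ℝ) : ℂ) * (S : ℂ)) * (S : ℂ)
        = (((1 - r / S ^ 2) * (S * S) : ℝ) : ℂ) by push_cast; ring] at h4
    have h3 : (0 : ℝ) ≤ (1 - r / S ^ 2) * (S * S) := Complex.zero_le_real.1 h4
    have hpos : (0 : ℝ) < S * S := mul_pos hSpos hSpos
    nlinarith
  exact ⟨r / S ^ 2, div_nonneg hα0.1 (sq_nonneg S), hle, hPfin, hQfin⟩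

end Helpers

section Choi
open Matrix

/-- The Choi matrix of a linear map on `Mat n`. -/
noncomputable def choiM {n : ℕ} (Φ : Mat n →ₗ[ℂ] Mat n) :
    Matrix (Fin n × Fin n) (Fin n × Fin n) ℂ :=
  Matrix.of fun p q => (Φ (Matrix.single p.2 q.2 1)) p.1 q.1

lemma choiM_add {n : ℕ} (Φ Ψ : Mat n →ₗ[ℂ] Mat n) :
    choiM (Φ + Ψ) = choiM Φ + choiM Ψ := by
  ext p q
  simp [choiM]

lemma choiM_psd {n : ℕ} {Φ : Mat n →ₗ[ℂ] Mat n} (h : IsCompletelyPositive n Φ) :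
    (choiM Φ).PosSemidef := by
  classical
  set w0 : Fin n × Fin n → ℂ := fun p => if p.1 = p.2 then 1 else 0 with hw0
  have hA := h n (vecMulVec w0 (star w0)) (vecMulVec_star_psd w0)
  have e : choiM Φ = Matrix.of fun p q : Fin n × Fin n =>
      (Φ (Matrix.of fun i j => (vecMulVec w0 (star w0)) (i, p.2) (j, q.2))) p.1 q.1 := by
    ext p q
    have harg : (Matrix.of fun i j => (vecMulVec w0 (star w0)) (i, p.2) (j, q.2))
        = Matrix.single p.2 q.2 (1 : ℂ) := by
      ext i j
      by_cases h1 : i = p.2 <;> by_cases h2 : j = q.2 <;>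
        simp [Matrix.single, vecMulVec_apply, hw0, h1, h2, eq_comm]
    simp only [choiM, Matrix.of_apply, harg]
  rw [e]
  exact hA

lemma choiM_adL {n : ℕ} (v : Mat n) :
    choiM (adL v) = vecMulVec (fun p : Fin n × Fin n => v p.1 p.2)
      (star fun p : Fin n × Fin n => v p.1 p.2) := by
  ext p q
  show (v * Matrix.single p.2 q.2 (1:ℂ) * star v) p.1 q.1 = _
  simp [Matrix.mul_apply, Matrix.single, ite_and, Matrix.star_apply,
    Finset.sum_ite_eq, mul_ite, ite_mul, zero_mul, mul_zero, Finset.mul_sum,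
    vecMulVec_apply]

lemma adL_cp {n : ℕ} (v : Mat n) : IsCompletelyPositive n (adL v) := by
  intro k A hA
  classical
  set M : Matrix (Fin n × Fin k) (Fin n × Fin k) ℂ :=
    Matrix.of fun P K : Fin n × Fin k => if P.2 = K.2 then v P.1 K.1 else 0 with hM
  have e : (Matrix.of fun p q : Fin n × Fin k =>
      (adL v (Matrix.of fun i j => A (i, p.2) (j, q.2))) p.1 q.1) = M * A * Mᴴ := by
    ext P Q
    show (v * (Matrix.of fun i j => A (i, P.2) (j, Q.2)) * star v) P.1 Q.1 = _
    simp [hM, Matrix.mul_apply, Fintype.sum_prod_type, Matrix.star_apply, conjTranspose_apply,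
      ite_mul, mul_ite, zero_mul, mul_zero, apply_ite, Finset.sum_ite_eq, Finset.sum_ite_eq',
      Finset.mul_sum, Finset.sum_mul, mul_assoc]
  rw [e]
  exact hA.mul_mul_conjTranspose_same M

lemma choiM_comp_adL_psd {n : ℕ} (a : Mat n) {Φ : Mat n →ₗ[ℂ] Mat n}
    (h : IsCompletelyPositive n Φ) : (choiM ((adL a).comp Φ)).PosSemidef := by
  classical
  set M : Matrix (Fin n × Fin n) (Fin n × Fin n) ℂ :=
    Matrix.of fun P K : Fin n × Fin n => if P.2 = K.2 then a P.1 K.1 else 0 with hM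
  have e : choiM ((adL a).comp Φ) = M * choiM Φ * Mᴴ := by
    ext P Q
    show (a * Φ (Matrix.single P.2 Q.2 1) * star a) P.1 Q.1 = _
    simp [hM, choiM, Matrix.mul_apply, Fintype.sum_prod_type, Matrix.star_apply,
      conjTranspose_apply, ite_mul, mul_ite, zero_mul, mul_zero, apply_ite,
      Finset.sum_ite_eq, Finset.sum_ite_eq', Finset.mul_sum, Finset.sum_mul, mul_assoc]
  rw [e]
  exact (choiM_psd h).mul_mul_conjTranspose_same M

lemma map_eq_sum_choi {n : ℕ} (Φ : Mat n →ₗ[ℂ] Mat n) (x : Mat n) :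
    Φ x = ∑ p : Fin n, ∑ q : Fin n, x p q • Φ (Matrix.single p q 1) := by
  conv_lhs => rw [matrix_eq_sum_single x]
  rw [map_sum]
  refine Finset.sum_congr rfl fun p _ => ?_
  rw [map_sum]
  refine Finset.sum_congr rfl fun q _ => ?_
  rw [← _root_.map_smul, smul_single, smul_eq_mul, mul_one]

lemma eq_smul_of_choiM {n : ℕ} {Φ Ψ : Mat n →ₗ[ℂ] Mat n} (c : ℂ)
    (h : choiM Φ = c • choiM Ψ) : Φ = c • Ψ := by
  have key : ∀ p q : Fin n, Φ (Matrix.single p q 1)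
      = c • Ψ (Matrix.single p q 1) := by
    intro p q
    ext i j
    have := congrFun (congrFun h (i, p)) (j, q)
    simpa [choiM] using this
  ext x : 1
  rw [LinearMap.smul_apply, map_eq_sum_choi Φ x, map_eq_sum_choi Ψ x, Finset.smul_sum]
  refine Finset.sum_congr rfl fun p _ => ?_
  rw [Finset.smul_sum]
  refine Finset.sum_congr rfl fun q _ => ?_
  rw [key, smul_comm]

end Choi

theorem automorphism_opExtreme {n : ℕ} (u : Mat n)
    (hu : u * star u = 1) (hu' : star u * u = 1) :
    IsOpExtreme n {Φ | IsUCP n Φ} (adL u) := by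
  constructor
  · -- membership
    refine ⟨?_, adL_cp u⟩
    show u * 1 * star u = 1
    rw [mul_one, hu]
  · intro a b Φ₁ Φ₂ h1 h2 ha hb hab heq
    obtain ⟨h1u, h1cp⟩ := h1
    obtain ⟨h2u, h2cp⟩ := h2
    rcases Nat.eq_zero_or_pos n with hn | hn
    · exfalso
      apply ha
      subst hn
      ext i j
      exact i.elim0
    set w : Fin n × Fin n → ℂ := fun p => u p.1 p.2 with hwdef
    have hw0 : w ≠ 0 := by
      intro h
      have i0 : Fin n := ⟨0, hn⟩
      have h1' : (u * star u) i0 i0 = 0 := by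
        rw [Matrix.mul_apply]
        refine Finset.sum_eq_zero fun k _ => ?_
        have : u i0 k = 0 := congrFun h (i0, k)
        rw [this, zero_mul]
      rw [hu, Matrix.one_apply_eq] at h1'
      exact one_ne_zero h1'
    have hC : choiM ((adL a).comp Φ₁) + choiM ((adL b).comp Φ₂) = vecMulVec w (star w) := by
      rw [← choiM_add, ← heq, choiM_adL]
    obtain ⟨l, hl0, hl1, hPeq, hQeq⟩ := rank_one_decomp w hw0
      (choiM_comp_adL_psd a h1cp) (choiM_comp_adL_psd b h2cp) hC
    have hΨ₁ : (adL a).comp Φ₁ = (l : ℂ) • adL u := by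
      refine eq_smul_of_choiM _ ?_
      rw [hPeq, choiM_adL]
    have hΨ₂ : (adL b).comp Φ₂ = ((1 - l : ℝ) : ℂ) • adL u := by
      refine eq_smul_of_choiM _ ?_
      rw [hQeq, choiM_adL]
    have haa : a * star a = (l : ℂ) • (1 : Mat n) := by
      have := LinearMap.congr_fun hΨ₁ 1
      simp only [LinearMap.comp_apply, h1u, LinearMap.smul_apply] at this
      calc a * star a = adL a 1 := by
            show _ = a * 1 * star a; rw [mul_one]
        _ = (l : ℂ) • adL u 1 := this
        _ = (l : ℂ) • (1 : Mat n) := by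
            show (l : ℂ) • (u * 1 * star u) = _
            rw [mul_one, hu]
    have hbb : b * star b = ((1 - l : ℝ) : ℂ) • (1 : Mat n) := by
      have := LinearMap.congr_fun hΨ₂ 1
      simp only [LinearMap.comp_apply, h2u, LinearMap.smul_apply] at this
      calc b * star b = adL b 1 := by
            show _ = b * 1 * star b; rw [mul_one]
        _ = ((1 - l : ℝ) : ℂ) • adL u 1 := this
        _ = ((1 - l : ℝ) : ℂ) • (1 : Mat n) := by
            show _ • (u * 1 * star u) = _
            rw [mul_one, hu]
    have hlpos : 0 < l := by
      rcases lt_or_eq_of_le hl0 with h | h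
      · exact h
      · exfalso
        apply ha
        have h0 : a * star a = 0 := by
          rw [haa, ← h]
          simp
        rw [Matrix.star_eq_conjTranspose] at h0
        have : aᴴᴴ * aᴴ = 0 := by rwa [Matrix.conjTranspose_conjTranspose]
        have := Matrix.conjTranspose_mul_self_eq_zero.mp this
        simpa using congrArg Matrix.conjTranspose this
    have hllt : l < 1 := by
      rcases lt_or_eq_of_le hl1 with h | h
      · exact h
      · exfalso
        apply hb
        have h0 : b * star b = 0 := by
          rw [hbb, h]
          simp
        rw [Matrix.star_eq_conjTranspose] at h0
        have : bᴴᴴ * bᴴ = 0 := by rwa [Matrix.conjTranspose_conjTranspose]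
        have := Matrix.conjTranspose_mul_self_eq_zero.mp this
        simpa using congrArg Matrix.conjTranspose this
    refine ⟨l, ⟨hlpos, hllt⟩, haa, hbb, ?_, ?_⟩
    · rw [hΨ₁, smul_smul, ← Complex.ofReal_mul, inv_mul_cancel₀ hlpos.ne',
        Complex.ofReal_one, one_smul]
    · rw [hΨ₂, smul_smul, ← Complex.ofReal_mul,
        inv_mul_cancel₀ (by linarith : (1 : ℝ) - l ≠ 0), Complex.ofReal_one, one_smul]
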